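/- Let φ be a non-degenerate trace-valued (σ,ε)-sesquilinear form on V, let A and B be maximal totally isotropic subspaces with A ∩ B = 0, let n = dim(A) be finite, and let a₁,…,aₙ be a basis of A. Then for every k ∈ {1,…,n}, the subspace B ∩ ⋂_{i≠k} aᵢ⊥ is 1-dimensional and is not contained in aₖ⊥. -/

import Mathlib

open MulOpposite

variable {K : Type*} [DivisionRing K]

/-- `σ` is an anti-automorphism of the division ring `K`. -/
def IsAntiAuto (σ : K → K) : Prop :=
  Function.Bijective σ ∧ (∀ a b : K, σ (a + b) = σ a + σ b) ∧
    ∀ a b : K, σ (a * b) = σ b * σ a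

/-- `(σ, ε)` is an admissible pair: `σ` is an anti-automorphism, `ε ≠ 0`,
`σ ε = ε⁻¹` and `σ ∘ σ` is conjugation by `ε`. -/
def IsAdmissiblePair (σ : K → K) (ε : K) : Prop :=
  IsAntiAuto σ ∧ ε ≠ 0 ∧ σ ε = ε⁻¹ ∧ ∀ t : K, σ (σ t) = ε * t * ε⁻¹

variable {V : Type*} [AddCommGroup V] [Module Kᵐᵒᵖ V]

/-- `φ` is a reflexive `(σ, ε)`-sesquilinear form on the right `K`-vector space `V`
(a right `K`-vector space is a left `Kᵐᵒᵖ`-vector space; right scalar multiplication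
of `x` by `α` is `op α • x`). -/
def IsSesq (σ : K → K) (ε : K) (φ : V → V → K) : Prop :=
  (∀ x y z : V, φ (x + y) z = φ x z + φ y z) ∧
  (∀ x y z : V, φ x (y + z) = φ x y + φ x z) ∧
  (∀ (α : K) (x y : V), φ (op α • x) y = σ α * φ x y) ∧
  (∀ (β : K) (x y : V), φ x (op β • y) = φ x y * β) ∧
  ∀ x y : V, φ y x = σ (φ x y) * ε

/-- A subspace `S` of `V` is totally isotropic for `φ` if `φ` vanishes identically on it. -/
def IsTotIso (φ : V → V → K) (S : Submodule Kᵐᵒᵖ V) : Prop :=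
  ∀ x ∈ S, ∀ y ∈ S, φ x y = 0

/-- A maximal totally isotropic subspace: totally isotropic and maximal under inclusion
among totally isotropic subspaces. -/
def IsMaxTotIso (φ : V → V → K) (S : Submodule Kᵐᵒᵖ V) : Prop :=
  IsTotIso φ S ∧ ∀ T : Submodule Kᵐᵒᵖ V, IsTotIso φ T → S ≤ T → T = S

/-- `φ` is trace-valued: every `φ(x,x)` is of the form `t + σ(t)ε`. -/
def IsTraceValued (σ : K → K) (ε : K) (φ : V → V → K) : Prop :=
  ∀ x : V, ∃ t : K, φ x x = t + σ t * ε

/-- Let `φ` be non-degenerate and trace-valued, `A, B` maximal totally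
isotropic with `A ∩ B = 0`, and `a₁,…,aₙ` a basis of `A` (`n = dim A` finite). Then for
every `k`, the subspace `B ∩ ⋂_{i≠k} aᵢ⊥` is 1-dimensional and not contained in `aₖ⊥`. -/
theorem stmt_11 (σ : K → K) (ε : K) (hpair : IsAdmissiblePair σ ε)
    (φ : V → V → K) (hφ : IsSesq σ ε φ) (htv : IsTraceValued σ ε φ)
    (hnd : ∀ a : V, (∀ x : V, φ a x = 0) → a = 0)
    (A B : Submodule Kᵐᵒᵖ V) (hA : IsMaxTotIso φ A) (hB : IsMaxTotIso φ B)
    (hAB : A ⊓ B = ⊥)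
    (n : ℕ) (bas : Module.Basis (Fin n) Kᵐᵒᵖ ↥A)
    (k : Fin n) (W : Submodule Kᵐᵒᵖ V)
    (hW : (W : Set V) =
      {x : V | x ∈ B ∧ ∀ i : Fin n, i ≠ k → φ ((bas i : ↥A) : V) x = 0}) :
    Module.rank Kᵐᵒᵖ ↥W = 1 ∧ ¬ ∀ x ∈ W, φ ((bas k : ↥A) : V) x = 0 := by
  clear htv hnd
  obtain ⟨⟨hσbij, hσadd, hσmul⟩, hε0, hσε, hσσ⟩ := hpair
  obtain ⟨hadd1, hadd2, hsmul1, hsmul2, hrefl⟩ := hφ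
  -- basic facts about σ
  have hσ0 : σ 0 = 0 := by
    have h := hσadd 0 0
    rw [add_zero] at h
    exact (left_eq_add.mp h)
  set τ : K → K := Function.surjInv hσbij.2 with hτ
  have hστ : ∀ c : K, σ (τ c) = c := fun c => Function.surjInv_eq hσbij.2 c
  -- swapping arguments of φ preserves vanishing
  have hswap : ∀ x y : V, φ x y = 0 → φ y x = 0 := by
    intro x y h
    rw [hrefl x y, h, hσ0, zero_mul]
  have hz2 : ∀ y : V, φ y 0 = 0 := by
    intro y
    have h := hadd2 y 0 0
    rw [add_zero] at h
    exact (left_eq_add.mp h)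
  -- subtraction in the second argument
  have hsub2 : ∀ y u w : V, φ y (u - w) = φ y u - φ y w := by
    intro y u w
    have h := hadd2 y (u - w) w
    rw [sub_add_cancel] at h
    exact eq_sub_of_add_eq h.symm
  -- the span of the images of the basis vectors is A
  have hspan : Submodule.span Kᵐᵒᵖ (Set.range fun i => ((bas i : ↥A) : V)) = A := by
    have h1 : (Set.range fun i => ((bas i : ↥A) : V)) = A.subtype '' Set.range bas := by
      rw [← Set.range_comp]; rfl
    rw [h1, ← Submodule.map_span, bas.span_eq, Submodule.map_top, Submodule.range_subtype]
  -- perpendicularity to all basis vectors gives perpendicularity to A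
  have hperp : ∀ b : V, (∀ i, φ ((bas i : ↥A) : V) b = 0) → ∀ a ∈ A, φ a b = 0 := by
    intro b hb a ha
    apply hswap
    let f : V →ₗ[Kᵐᵒᵖ] K :=
      { toFun := φ b
        map_add' := hadd2 b
        map_smul' := fun c x => by
          show φ b (c • x) = c • φ b x
          rw [← MulOpposite.op_unop c, hsmul2]
          rfl }
    have hker : A ≤ LinearMap.ker f := by
      rw [← hspan, Submodule.span_le]
      rintro _ ⟨i, rfl⟩
      simp only [SetLike.mem_coe, LinearMap.mem_ker]
      exact hswap _ _ (hb i)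
    exact (LinearMap.mem_ker).mp (hker ha)
  -- absorption: a vector perpendicular to a maximal totally isotropic subspace
  -- and isotropic itself lies in it
  have habs : ∀ S : Submodule Kᵐᵒᵖ V, IsMaxTotIso φ S → ∀ v : V, φ v v = 0 →
      (∀ s ∈ S, φ v s = 0) → v ∈ S := by
    intro S hS v hvv hvs
    have hT : IsTotIso φ (S ⊔ Submodule.span Kᵐᵒᵖ {v}) := by
      intro x hx y hy
      rw [Submodule.mem_sup] at hx hy
      obtain ⟨s, hs, x', hx', rfl⟩ := hx
      obtain ⟨t, ht, y', hy', rfl⟩ := hy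
      rw [Submodule.mem_span_singleton] at hx' hy'
      obtain ⟨c, rfl⟩ := hx'
      obtain ⟨d, rfl⟩ := hy'
      rw [hadd1, hadd2, hadd2]
      have h1 : φ s t = 0 := hS.1 s hs t ht
      have h2 : φ s (d • v) = 0 := by
        rw [← MulOpposite.op_unop d, hsmul2, hswap _ _ (hvs s hs), zero_mul]
      have h3 : φ (c • v) t = 0 := by
        rw [← MulOpposite.op_unop c, hsmul1, hvs t ht, mul_zero]
      have h4 : φ (c • v) (d • v) = 0 := by
        rw [← MulOpposite.op_unop c, ← MulOpposite.op_unop d, hsmul1, hsmul2, hvv,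
          zero_mul, mul_zero]
      rw [h1, h2, h3, h4]
      simp
    have hTS := hS.2 _ hT le_sup_left
    rw [← hTS]
    exact Submodule.mem_sup_right (Submodule.mem_span_singleton_self v)
  -- injectivity of b ↦ (φ (aᵢ) b)
  have hinj : ∀ b ∈ B, (∀ i, φ ((bas i : ↥A) : V) b = 0) → b = 0 := by
    intro b hb h0
    have hbA : b ∈ A :=
      habs A hA b (hB.1 b hb b hb) (fun s hs => hswap _ _ (hperp b h0 s hs))
    have : b ∈ A ⊓ B := Submodule.mem_inf.mpr ⟨hbA, hb⟩
    rw [hAB] at this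
    simpa using this
  -- the linear map L : V → Kⁿ
  let L : V →ₗ[Kᵐᵒᵖ] (Fin n → K) :=
    { toFun := fun x i => φ ((bas i : ↥A) : V) x
      map_add' := fun x y => funext fun i => hadd2 _ x y
      map_smul' := fun c x => funext fun i => by
        show φ ((bas i : ↥A) : V) (c • x) = (c • fun i => φ ((bas i : ↥A) : V) x) i
        rw [← MulOpposite.op_unop c, hsmul2]
        rfl }
  have hLval : ∀ (x : V) (i : Fin n), L x i = φ ((bas i : ↥A) : V) x := fun x i => rfl
  -- first argument: sum and scalar expansion
  have hsum1 : ∀ (γ : Fin n → K) (b : V),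
      φ (∑ i, op (γ i) • ((bas i : ↥A) : V)) b
        = ∑ i, σ (γ i) * φ ((bas i : ↥A) : V) b := by
    intro γ b
    have hmap := map_sum (AddMonoidHom.mk' (fun x => φ x b) (fun x y => hadd1 x y b))
      (fun i => op (γ i) • ((bas i : ↥A) : V)) Finset.univ
    simp only [AddMonoidHom.mk'_apply] at hmap
    rw [hmap]
    exact Finset.sum_congr rfl fun i _ => hsmul1 (γ i) _ b
  -- surjectivity of L restricted to B
  have hsurjL : Submodule.map L B = ⊤ := by
    by_contra hpt
    obtain ⟨x, hx⟩ : ∃ x, x ∉ Submodule.map L B := by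
      by_contra h
      push_neg at h
      exact hpt (Submodule.eq_top_iff'.mpr h)
    set p := Submodule.map L B with hpdef
    have hx0 : p.mkQ x ≠ 0 := by
      rw [Submodule.mkQ_apply, ne_eq, Submodule.Quotient.mk_eq_zero]
      exact hx
    set bq := Module.Basis.ofVectorSpace Kᵐᵒᵖ ((Fin n → K) ⧸ p) with hbq
    have hrepr : bq.repr (p.mkQ x) ≠ 0 := by
      intro h
      apply hx0
      have := congrArg bq.repr.symm h
      simpa using this
    obtain ⟨j, hj⟩ : ∃ j, bq.repr (p.mkQ x) j ≠ 0 := by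
      by_contra h
      push_neg at h
      exact hrepr (Finsupp.ext h)
    set g : (Fin n → K) →ₗ[Kᵐᵒᵖ] Kᵐᵒᵖ := (bq.coord j).comp p.mkQ with hg
    have hgp : ∀ w ∈ p, g w = 0 := by
      intro w hw
      have : p.mkQ w = 0 := by
        rw [Submodule.mkQ_apply, Submodule.Quotient.mk_eq_zero]
        exact hw
      simp [hg, LinearMap.comp_apply, this]
    have hgx : g x ≠ 0 := hj
    -- coefficients of g
    set c : Fin n → K := fun i => unop (g (Pi.single i 1)) with hc
    have hgform : ∀ w : Fin n → K, g w = op (∑ i, c i * w i) := by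
      intro w
      have hw : w = ∑ i, op (w i) • Pi.single i (1 : K) := by
        funext j'
        rw [Finset.sum_apply]
        simp only [Pi.smul_apply, op_smul_eq_mul, Pi.single_apply]
        simp [Finset.sum_ite_eq]
      calc g w = g (∑ i, op (w i) • Pi.single i (1 : K)) := by rw [← hw]
        _ = ∑ i, op (w i) • g (Pi.single i (1 : K)) := by
            rw [map_sum]
            simp only [map_smul]
        _ = ∑ i, op (c i * w i) := by
            refine Finset.sum_congr rfl fun i _ => ?_
            rw [smul_eq_mul, ← MulOpposite.op_unop (g (Pi.single i 1)), ← op_mul]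
        _ = op (∑ i, c i * w i) :=
            (map_sum (MulOpposite.opAddEquiv (α := K)) (fun i => c i * w i)
              Finset.univ).symm
    -- some coefficient is nonzero
    obtain ⟨i₀, hi₀⟩ : ∃ i, c i ≠ 0 := by
      by_contra h
      push_neg at h
      apply hgx
      rw [hgform x]
      simp [h]
    -- build the offending vector of A
    set a' : ↥A := ∑ i, op (τ (c i)) • bas i with ha'
    have ha'V : (a' : V) = ∑ i, op (τ (c i)) • ((bas i : ↥A) : V) := by
      rw [ha']
      push_cast
      rfl
    have ha'ne : a' ≠ 0 := by
      intro h
      have hli := Fintype.linearIndependent_iff.mp bas.linearIndependent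
        (fun i => op (τ (c i))) (by rw [← ha']; exact_mod_cast h) i₀
      apply hi₀
      rw [← hστ (c i₀), (MulOpposite.op_eq_zero_iff _).mp hli, hσ0]
    have haB : ∀ b ∈ B, φ (a' : V) b = 0 := by
      intro b hb
      rw [ha'V, hsum1]
      have : ∀ i, σ (τ (c i)) * φ ((bas i : ↥A) : V) b = c i * L b i := by
        intro i
        rw [hστ, hLval]
      rw [Finset.sum_congr rfl fun i _ => this i]
      have hLbp : L b ∈ p := Submodule.mem_map_of_mem hb
      have := hgp (L b) hLbp
      rw [hgform (L b)] at this
      exact (MulOpposite.op_eq_zero_iff _).mp this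
    have ha'B : (a' : V) ∈ B :=
      habs B hB (a' : V) (hA.1 _ a'.2 _ a'.2) haB
    have : (a' : V) ∈ A ⊓ B := Submodule.mem_inf.mpr ⟨a'.2, ha'B⟩
    rw [hAB] at this
    exact ha'ne (by exact_mod_cast (Submodule.mem_bot _).mp this)
  -- membership criterion for W
  have hmemW : ∀ x : V, x ∈ W ↔ x ∈ B ∧ ∀ i : Fin n, i ≠ k → φ ((bas i : ↥A) : V) x = 0 := by
    intro x
    rw [← SetLike.mem_coe, hW]
    rfl
  -- get the generator b₀ of W
  obtain ⟨b₀, hb₀B, hLb₀⟩ : ∃ b₀ ∈ B, L b₀ = Pi.single k 1 := by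
    have : Pi.single k (1 : K) ∈ Submodule.map L B := by
      rw [hsurjL]; trivial
    exact Submodule.mem_map.mp this
  have hφk : φ ((bas k : ↥A) : V) b₀ = 1 := by
    have := congrFun hLb₀ k
    rw [hLval] at this
    rw [this, Pi.single_eq_same]
  have hφi : ∀ i : Fin n, i ≠ k → φ ((bas i : ↥A) : V) b₀ = 0 := by
    intro i hik
    have := congrFun hLb₀ i
    rw [hLval] at this
    rw [this, Pi.single_eq_of_ne hik]
  have hb₀W : b₀ ∈ W := (hmemW b₀).mpr ⟨hb₀B, hφi⟩
  have hb₀ne : b₀ ≠ 0 := by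
    intro h
    rw [h, hz2] at hφk
    exact zero_ne_one hφk
  -- W is the span of b₀
  have hWspan : W = Submodule.span Kᵐᵒᵖ {b₀} := by
    apply le_antisymm
    · intro x hx
      obtain ⟨hxB, hx0⟩ := (hmemW x).mp hx
      rw [Submodule.mem_span_singleton]
      refine ⟨op (φ ((bas k : ↥A) : V) x), ?_⟩
      have hd : x - op (φ ((bas k : ↥A) : V) x) • b₀ = 0 := by
        apply hinj _ (Submodule.sub_mem B hxB (Submodule.smul_mem _ _ hb₀B))
        intro i
        rw [hsub2, hsmul2]
        by_cases hik : i = k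
        · subst hik
          rw [hφk, one_mul, sub_self]
        · rw [hx0 i hik, hφi i hik, zero_mul, sub_zero]
      have := sub_eq_zero.mp hd
      exact this.symm
    · rw [Submodule.span_le, Set.singleton_subset_iff]
      exact hb₀W
  constructor
  · rw [hWspan, rank_span_set ((linearIndepOn_singleton_iff _).mpr hb₀ne), Cardinal.mk_singleton]
  · intro h
    have := h b₀ hb₀W
    rw [hφk] at this
    exact one_ne_zero this
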